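/- For m ≥ 1 and n ≥ 0, the m-fold binomial convolution of the Cauchy numbers satisfies ∑_{k_1+⋯+k_m=n} multinomial(n; k_1,…,k_m) c_{k_1}⋯c_{k_m} = ∑_{k=0}^{n} s(n,k)·S(m+k,m)/C(m+k,m). -/

import Mathlib

open Finset

/-- Falling factorial `(θ)_n = θ(θ-1)⋯(θ-n+1)`. -/
noncomputable def fallFac (θ : ℝ) (n : ℕ) : ℝ := ∏ i ∈ Finset.range n, (θ - i)

/-- Cauchy numbers `c n = ∫_0^1 (θ)_n dθ`. -/
noncomputable def cauchy (n : ℕ) : ℝ := ∫ θ in (0:ℝ)..1, fallFac θ n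

/-- Signed Stirling numbers of the first kind. -/
noncomputable def stirlingFst (n k : ℕ) : ℝ := (descPochhammer ℝ n).coeff k

/-- Stirling numbers of the second kind. -/
def stirlingSnd : ℕ → ℕ → ℕ
  | 0, 0 => 1
  | 0, _ + 1 => 0
  | _ + 1, 0 => 0
  | n + 1, k + 1 => (k + 1) * stirlingSnd n (k + 1) + stirlingSnd n k

lemma fallFac_zero (θ : ℝ) : fallFac θ 0 = 1 := by simp [fallFac]

lemma fallFac_succ (θ : ℝ) (n : ℕ) : fallFac θ (n + 1) = fallFac θ n * (θ - n) :=
  Finset.prod_range_succ _ _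

lemma descPochhammer_eval_eq_fallFac (θ : ℝ) (n : ℕ) :
    (descPochhammer ℝ n).eval θ = fallFac θ n := by
  induction n with
  | zero => simp [fallFac_zero]
  | succ n ih => rw [descPochhammer_succ_eval, ih, fallFac_succ]

lemma continuous_fallFac (n : ℕ) : Continuous fun θ : ℝ => fallFac θ n := by
  unfold fallFac
  exact continuous_finset_prod _ fun i _ => by continuity

lemma fallFac_zero_left (n : ℕ) : fallFac 0 n = if n = 0 then 1 else 0 := by
  rw [← descPochhammer_eval_eq_fallFac, descPochhammer_eval_zero]

lemma fallFac_eq_sum (y : ℝ) (n : ℕ) :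
    fallFac y n = ∑ k ∈ range (n + 1), stirlingFst n k * y ^ k := by
  rw [← descPochhammer_eval_eq_fallFac, Polynomial.eval_eq_sum_range' (n := n + 1), ]
  · simp [stirlingFst]
  · rw [descPochhammer_natDegree]; omega

lemma fallFac_add (x y : ℝ) (n : ℕ) :
    fallFac (x + y) n =
      ∑ p ∈ Finset.HasAntidiagonal.antidiagonal n, (n.choose p.1 : ℝ) * fallFac x p.1 * fallFac y p.2 := by
  induction n with
  | zero => simp [fallFac_zero]
  | succ n ih =>
    have hW : ∑ p ∈ Finset.HasAntidiagonal.antidiagonal (n+1), (n.choose p.1 : ℝ) * fallFac x p.1 * fallFac y p.2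
        = ∑ p ∈ Finset.HasAntidiagonal.antidiagonal n, (n.choose p.1 : ℝ) * fallFac x p.1 * fallFac y (p.2 + 1) := by
      rw [Finset.Nat.sum_antidiagonal_succ'
        (f := fun p => (n.choose p.1 : ℝ) * fallFac x p.1 * fallFac y p.2)]
      simp [Nat.choose_succ_self]
    have hW2 : ∑ p ∈ Finset.HasAntidiagonal.antidiagonal (n+1), (n.choose p.1 : ℝ) * fallFac x p.1 * fallFac y p.2
        = fallFac y (n+1) + ∑ p ∈ Finset.HasAntidiagonal.antidiagonal n, (n.choose (p.1+1) : ℝ) * fallFac x (p.1+1) * fallFac y p.2 := by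
      rw [Finset.Nat.sum_antidiagonal_succ
        (f := fun p => (n.choose p.1 : ℝ) * fallFac x p.1 * fallFac y p.2)]
      simp [fallFac_zero]
    have key : ∑ p ∈ Finset.HasAntidiagonal.antidiagonal (n+1), ((n+1).choose p.1 : ℝ) * fallFac x p.1 * fallFac y p.2
        = (∑ p ∈ Finset.HasAntidiagonal.antidiagonal n, (n.choose p.1 : ℝ) * fallFac x (p.1+1) * fallFac y p.2)
          + ∑ p ∈ Finset.HasAntidiagonal.antidiagonal n, (n.choose p.1 : ℝ) * fallFac x p.1 * fallFac y (p.2+1) := by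
      rw [Finset.Nat.sum_antidiagonal_succ
        (f := fun p => ((n+1).choose p.1 : ℝ) * fallFac x p.1 * fallFac y p.2)]
      rw [← hW, hW2]
      have : ∀ p ∈ Finset.HasAntidiagonal.antidiagonal n,
          ((n+1).choose (p.1+1) : ℝ) * fallFac x (p.1+1) * fallFac y p.2
          = (n.choose p.1 : ℝ) * fallFac x (p.1+1) * fallFac y p.2
            + (n.choose (p.1+1) : ℝ) * fallFac x (p.1+1) * fallFac y p.2 := by
        intro p hp
        rw [Nat.choose_succ_succ]
        push_cast
        ring
      rw [Finset.sum_congr rfl this, Finset.sum_add_distrib]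
      simp [fallFac_zero]
      ring
    rw [fallFac_succ, ih, key, Finset.sum_mul, ← Finset.sum_add_distrib]
    refine Finset.sum_congr rfl fun p hp => ?_
    rw [Finset.HasAntidiagonal.mem_antidiagonal] at hp
    have h1 : (x + y) - (n:ℝ) = (x - p.1) + (y - p.2) := by
      have : (p.1 : ℝ) + p.2 = n := by exact_mod_cast congrArg (Nat.cast : ℕ → ℝ) hp
      linarith
    rw [h1, fallFac_succ, fallFac_succ]
    ring


lemma stirlingSnd_zero_right : ∀ n, stirlingSnd n 0 = if n = 0 then 1 else 0
  | 0 => rfl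
  | _ + 1 => rfl

lemma stirlingSnd_eq_zero_of_lt : ∀ {n m}, n < m → stirlingSnd n m = 0
  | 0, _ + 1, _ => rfl
  | n + 1, m + 1, h => by
    rw [stirlingSnd, stirlingSnd_eq_zero_of_lt (by omega), stirlingSnd_eq_zero_of_lt (by omega)]
    simp

lemma choose_shift_sum (N : ℕ) (f : ℕ → ℕ) :
    ∑ i ∈ range (N + 2), (N + 1).choose i * f i
      = ∑ i ∈ range (N + 1), N.choose i * f i + ∑ i ∈ range (N + 1), N.choose i * f (i + 1) := by
  rw [Finset.sum_range_succ' (fun i => (N + 1).choose i * f i)]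
  have h1 : ∀ i, (N + 1).choose (i + 1) * f (i + 1)
      = N.choose i * f (i + 1) + N.choose (i + 1) * f (i + 1) := by
    intro i; rw [Nat.choose_succ_succ, Nat.add_mul]
  simp_rw [h1]
  rw [Finset.sum_add_distrib]
  have h2 : ∑ i ∈ range (N + 1), N.choose (i + 1) * f (i + 1) + N.choose 0 * f 0
      = ∑ i ∈ range (N + 2), N.choose i * f i :=
    (Finset.sum_range_succ' (fun i => N.choose i * f i) (N + 1)).symm
  have h3 : ∑ i ∈ range (N + 2), N.choose i * f i = ∑ i ∈ range (N + 1), N.choose i * f i := by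
    rw [Finset.sum_range_succ, Nat.choose_succ_self, Nat.zero_mul, Nat.add_zero]
  rw [Nat.choose_zero_right] at h2 ⊢
  omega

lemma stirling_key : ∀ N m, ∑ i ∈ range (N + 1), N.choose i * stirlingSnd i m
    = (m + 1) * stirlingSnd N (m + 1) + stirlingSnd N m := by
  intro N
  induction N with
  | zero => intro m; simp [stirlingSnd_eq_zero_of_lt]
  | succ N ih =>
    intro m
    rw [choose_shift_sum N (fun i => stirlingSnd i m), ih]
    match m with
    | 0 =>
      have : ∀ i ∈ range (N + 1), N.choose i * stirlingSnd (i + 1) 0 = 0 := by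
        intro i _; rw [stirlingSnd_zero_right]; simp
      rw [Finset.sum_congr rfl this]
      show (1 * stirlingSnd N 1 + stirlingSnd N 0) + ∑ _i ∈ range (N+1), 0
        = 1 * stirlingSnd (N+1) 1 + stirlingSnd (N+1) 0
      have e1 : stirlingSnd (N + 1) 1 = 1 * stirlingSnd N 1 + stirlingSnd N 0 := rfl
      have e2 : stirlingSnd (N + 1) 0 = 0 := rfl
      rw [e1, e2, Finset.sum_const_zero]
      omega
    | M + 1 =>
      have hrec : ∀ i, stirlingSnd (i + 1) (M + 1)
          = (M + 1) * stirlingSnd i (M + 1) + stirlingSnd i M := fun i => rfl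
      have hsum : ∑ i ∈ range (N + 1), N.choose i * stirlingSnd (i + 1) (M + 1)
          = (M + 1) * (∑ i ∈ range (N + 1), N.choose i * stirlingSnd i (M + 1))
            + ∑ i ∈ range (N + 1), N.choose i * stirlingSnd i M := by
        rw [Finset.mul_sum, ← Finset.sum_add_distrib]
        refine Finset.sum_congr rfl fun i _ => ?_
        rw [hrec i]; ring
      rw [hsum, ih, ih]
      have g1 : stirlingSnd (N + 1) (M + 2)
          = (M + 2) * stirlingSnd N (M + 2) + stirlingSnd N (M + 1) := rfl
      have g2 : stirlingSnd (N + 1) (M + 1)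
          = (M + 1) * stirlingSnd N (M + 1) + stirlingSnd N M := rfl
      rw [g1, g2]
      ring


lemma nat_key (m a b : ℕ) :
    (a + b).choose a * ((m + 1) * (m + a + b + 1).choose (m + 1))
      = (m + a + b + 1).choose (m + b) * ((a + 1) * (m + b).choose m) := by
  apply Nat.eq_of_mul_eq_mul_right
    (show 0 < a.factorial * b.factorial * m.factorial by positivity)
  have h1 : (a + b).choose a * a.factorial * b.factorial = (a + b).factorial := by
    have h := Nat.choose_mul_factorial_mul_factorial (show a ≤ a + b by omega)
    rwa [show a + b - a = b by omega] at h
  have h2 : (m + a + b + 1).choose (m + 1) * (m + 1).factorial * (a + b).factorial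
      = (m + a + b + 1).factorial := by
    have h := Nat.choose_mul_factorial_mul_factorial (show m + 1 ≤ m + a + b + 1 by omega)
    rwa [show m + a + b + 1 - (m + 1) = a + b by omega] at h
  have h3 : (m + b).choose m * m.factorial * b.factorial = (m + b).factorial := by
    have h := Nat.choose_mul_factorial_mul_factorial (show m ≤ m + b by omega)
    rwa [show m + b - m = b by omega] at h
  have h4 : (m + a + b + 1).choose (m + b) * (m + b).factorial * (a + 1).factorial
      = (m + a + b + 1).factorial := by
    have h := Nat.choose_mul_factorial_mul_factorial (show m + b ≤ m + a + b + 1 by omega)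
    rwa [show m + a + b + 1 - (m + b) = a + 1 by omega] at h
  calc (a + b).choose a * ((m + 1) * (m + a + b + 1).choose (m + 1))
        * (a.factorial * b.factorial * m.factorial)
      = ((m + a + b + 1).choose (m + 1) * ((m + 1) * m.factorial))
          * ((a + b).choose a * a.factorial * b.factorial) := by ring
    _ = (m + a + b + 1).choose (m + 1) * (m + 1).factorial * (a + b).factorial := by
        rw [h1, Nat.factorial_succ]
    _ = (m + a + b + 1).factorial := h2
    _ = (m + a + b + 1).choose (m + b) * (m + b).factorial * (a + 1).factorial := h4.symm
    _ = ((m + a + b + 1).choose (m + b) * ((a + 1) * (m + b).choose m))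
          * (a.factorial * b.factorial * m.factorial) := by
        rw [← h3, Nat.factorial_succ]; ring

lemma stirling_shift (m k : ℕ) :
    ∑ b ∈ range (k + 1), (m + k + 1).choose (m + b) * stirlingSnd (m + b) m
      = (m + 1) * stirlingSnd (m + k + 1) (m + 1) := by
  set N := m + k + 1 with hN
  have key := stirling_key N m
  rw [Finset.sum_range_succ, Nat.choose_self, one_mul] at key
  have hmain : ∑ i ∈ range N, N.choose i * stirlingSnd i m
      = (m + 1) * stirlingSnd N (m + 1) := by omega
  rw [← hmain]
  have hmap : ∑ b ∈ range (k + 1), N.choose (m + b) * stirlingSnd (m + b) m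
      = ∑ i ∈ (range (k + 1)).map (addLeftEmbedding m), N.choose i * stirlingSnd i m := by
    rw [Finset.sum_map]
    rfl
  rw [hmap]
  apply Finset.sum_subset
  · intro i hi
    rw [Finset.mem_map] at hi
    obtain ⟨b, hb, rfl⟩ := hi
    rw [Finset.mem_range] at hb ⊢
    have : addLeftEmbedding m b = m + b := rfl
    omega
  · intro i hi hni
    rw [Finset.mem_range] at hi
    have : i < m := by
      by_contra h
      apply hni
      rw [Finset.mem_map]
      exact ⟨i - m, Finset.mem_range.mpr (by omega), by
        show m + (i - m) = i; omega⟩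
    rw [stirlingSnd_eq_zero_of_lt this, Nat.mul_zero]


noncomputable def Jpow : ℕ → ℕ → ℝ → ℝ
  | 0 => fun k y => y ^ k
  | m + 1 => fun k y => ∫ θ in (0:ℝ)..1, Jpow m k (y + θ)

lemma Jpow_zero_def (k : ℕ) (y : ℝ) : Jpow 0 k y = y ^ k := rfl

lemma Jpow_succ_def (m k : ℕ) (y : ℝ) :
    Jpow (m + 1) k y = ∫ θ in (0:ℝ)..1, Jpow m k (y + θ) := rfl

lemma Jpow_add : ∀ m k : ℕ, ∀ y z : ℝ,
    Jpow m k (y + z) = ∑ p ∈ antidiagonal k, (k.choose p.1 : ℝ) * y ^ p.1 * Jpow m p.2 z := by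
  intro m
  induction m with
  | zero =>
    intro k y z
    show (y + z) ^ k = _
    rw [add_pow, Finset.Nat.sum_antidiagonal_eq_sum_range_succ_mk]
    refine Finset.sum_congr rfl fun i _ => ?_
    show y ^ i * z ^ (k - i) * k.choose i = (k.choose i : ℝ) * y ^ i * (z ^ (k - i))
    ring
  | succ m ih =>
    intro k y z
    rw [Jpow_succ_def]
    have h1 : ∀ θ : ℝ, Jpow m k (y + z + θ)
        = ∑ p ∈ antidiagonal k, (k.choose p.1 : ℝ) * y ^ p.1 * Jpow m p.2 (z + θ) := by
      intro θ
      rw [show y + z + θ = y + (z + θ) by ring, ih k y (z + θ)]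
    simp only [h1]
    rw [intervalIntegral.integral_finset_sum]
    · refine Finset.sum_congr rfl fun p _ => ?_
      rw [mul_assoc, intervalIntegral.integral_const_mul, mul_assoc, Jpow_succ_def]
    · intro p _
      apply Continuous.intervalIntegrable
      have h2 : (fun θ : ℝ => (k.choose p.1 : ℝ) * y ^ p.1 * Jpow m p.2 (z + θ))
          = fun θ : ℝ => (k.choose p.1 : ℝ) * y ^ p.1 *
              ∑ q ∈ antidiagonal p.2, (p.2.choose q.1 : ℝ) * θ ^ q.1 * Jpow m q.2 z := by
        funext θ
        rw [show z + θ = θ + z by ring, ih p.2 θ z]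
      rw [h2]
      exact continuous_const.mul (continuous_finset_sum _ fun q _ =>
        (continuous_const.mul (continuous_pow _)).mul continuous_const)

lemma Jpow_zero_eq : ∀ m k : ℕ, Jpow m k 0 = (stirlingSnd (m + k) m : ℝ) / ((m + k).choose m : ℝ) := by
  intro m
  induction m with
  | zero =>
    intro k
    show (0:ℝ) ^ k = _
    match k with
    | 0 => simp [stirlingSnd]
    | k + 1 => simp [stirlingSnd_zero_right]
  | succ m ih =>
    intro k
    rw [Jpow_succ_def]
    have h1 : ∀ θ : ℝ, Jpow m k (0 + θ)
        = ∑ p ∈ antidiagonal k, (k.choose p.1 : ℝ) * θ ^ p.1 * Jpow m p.2 0 := by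
      intro θ
      rw [show (0:ℝ) + θ = θ + 0 by ring, Jpow_add m k θ 0]
    simp only [h1]
    rw [intervalIntegral.integral_finset_sum]
    swap
    · intro p _
      apply Continuous.intervalIntegrable
      exact (continuous_const.mul (continuous_pow _)).mul continuous_const
    have h2 : ∀ p ∈ antidiagonal k,
        (∫ θ in (0:ℝ)..1, (k.choose p.1 : ℝ) * θ ^ p.1 * Jpow m p.2 0)
          = ((m + k + 1).choose (m + p.2) * stirlingSnd (m + p.2) m : ℝ)
              / ((m + 1) * (m + k + 1).choose (m + 1) : ℝ) := by
      intro p hp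
      rw [Finset.HasAntidiagonal.mem_antidiagonal] at hp
      have e1 : (fun θ : ℝ => (k.choose p.1 : ℝ) * θ ^ p.1 * Jpow m p.2 0)
          = fun θ : ℝ => ((k.choose p.1 : ℝ) * Jpow m p.2 0) * θ ^ p.1 := by
        funext θ; ring
      rw [e1, intervalIntegral.integral_const_mul, integral_pow, ih p.2]
      have key := nat_key m p.1 p.2
      rw [show m + p.1 + p.2 + 1 = m + k + 1 by omega, hp] at key
      have keyR : (k.choose p.1 : ℝ) * ((m + 1) * (m + k + 1).choose (m + 1))
          = ((m + k + 1).choose (m + p.2) : ℝ) * ((p.1 + 1) * (m + p.2).choose m) := by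
        exact_mod_cast congrArg (Nat.cast : ℕ → ℝ) key
      have hb : (0:ℝ) < ((m + p.2).choose m : ℝ) := by
        exact_mod_cast Nat.choose_pos (by omega)
      have hM : (0:ℝ) < ((m + k + 1).choose (m + 1) : ℝ) := by
        exact_mod_cast Nat.choose_pos (by omega)
      have ha : (0:ℝ) < (p.1 : ℝ) + 1 := by positivity
      have hm1 : (0:ℝ) < (m : ℝ) + 1 := by positivity
      have hQ : ((1:ℝ) ^ (p.1 + 1) - 0 ^ (p.1 + 1)) = 1 := by norm_num
      rw [hQ]
      field_simp
      linear_combination (stirlingSnd (m + p.2) m : ℝ) * keyR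
    rw [Finset.sum_congr rfl h2]
    set g : ℕ → ℝ := fun b => ((m + k + 1).choose (m + b) * stirlingSnd (m + b) m : ℕ)
        / ((m + 1) * (m + k + 1).choose (m + 1) : ℝ) with hg
    have h3 : ∑ p ∈ antidiagonal k,
        ((m + k + 1).choose (m + p.2) * stirlingSnd (m + p.2) m : ℝ)
          / ((m + 1) * (m + k + 1).choose (m + 1) : ℝ)
        = ∑ b ∈ range (k + 1), g b := by
      rw [Finset.Nat.sum_antidiagonal_eq_sum_range_succ_mk]
      rw [← Finset.sum_range_reflect g (k + 1)]
      refine Finset.sum_congr rfl fun i _ => ?_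
      rw [hg]
      push_cast
      norm_num
    rw [h3, hg, ← Finset.sum_div, ← Nat.cast_sum, stirling_shift]
    have hm1 : ((m:ℝ) + 1) ≠ 0 := by positivity
    rw [show m + 1 + k = m + k + 1 by omega]
    push_cast
    rw [mul_div_mul_left _ _ hm1]


lemma multinomial_map_emb {m : ℕ} (e : Fin m ↪ Fin (m+1)) (f : Fin (m+1) → ℕ) :
    Nat.multinomial (univ.map e) f = Nat.multinomial univ (fun i => f (e i)) := by
  unfold Nat.multinomial
  rw [Finset.sum_map, Finset.prod_map]

lemma multinomial_fin_cons {m : ℕ} (a : ℕ) (k : Fin m → ℕ) :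
    Nat.multinomial univ (Fin.cons a k) = (a + ∑ i, k i).choose a * Nat.multinomial univ k := by
  rw [Fin.univ_succ, Nat.multinomial_cons, multinomial_map_emb]
  have h1 : (Fin.cons a k : Fin (m+1) → ℕ) 0 = a := rfl
  have h2 : (fun i => (Fin.cons a k : Fin (m+1) → ℕ)
      ((⟨Fin.succ, Fin.succ_injective _⟩ : Fin m ↪ Fin (m+1)) i)) = k := by
    funext i
    show (Fin.cons a k : Fin (m+1) → ℕ) (Fin.succ i) = k i
    rw [Fin.cons_succ]
  have h3 : ∑ i ∈ univ.map ⟨Fin.succ, Fin.succ_injective _⟩, (Fin.cons a k : Fin (m+1) → ℕ) i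
      = ∑ i, k i := by
    rw [Finset.sum_map]; simp [Fin.cons_succ]
  rw [h1, h2, h3]

lemma sum_antidiagonalTuple_succ {M : Type*} [AddCommMonoid M] {m n : ℕ}
    (g : (Fin (m + 1) → ℕ) → M) :
    ∑ t ∈ Finset.Nat.antidiagonalTuple (m + 1) n, g t
      = ∑ p ∈ antidiagonal n, ∑ k ∈ Finset.Nat.antidiagonalTuple m p.2, g (Fin.cons p.1 k) := by
  rw [← Finset.sum_sigma (antidiagonal n) (fun p => Finset.Nat.antidiagonalTuple m p.2)
    (fun x => g (Fin.cons x.1.1 x.2))]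
  apply Finset.sum_nbij' (fun t => ⟨(t 0, ∑ i, t (Fin.succ i)), Fin.tail t⟩)
    (fun x => Fin.cons x.1.1 x.2)
  · intro t ht
    rw [Finset.Nat.mem_antidiagonalTuple] at ht
    rw [Finset.mem_sigma, Finset.HasAntidiagonal.mem_antidiagonal, Finset.Nat.mem_antidiagonalTuple]
    constructor
    · rw [← ht, Fin.sum_univ_succ]
    · rfl
  · intro x hx
    rw [Finset.mem_sigma, Finset.HasAntidiagonal.mem_antidiagonal, Finset.Nat.mem_antidiagonalTuple] at hx
    rw [Finset.Nat.mem_antidiagonalTuple, Fin.sum_univ_succ, Fin.cons_zero]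
    simp only [Fin.cons_succ]
    rw [hx.2, hx.1]
  · intro t ht
    exact Fin.cons_self_tail t
  · intro x hx
    obtain ⟨⟨a, b⟩, k⟩ := x
    rw [Finset.mem_sigma, Finset.HasAntidiagonal.mem_antidiagonal, Finset.Nat.mem_antidiagonalTuple] at hx
    refine Sigma.ext ?_ ?_
    · simp only [Fin.cons_zero, Fin.cons_succ]
      rw [hx.2]
    · simp only [Fin.tail_cons]
      exact HEq.rfl
  · intro t ht
    rw [Fin.cons_self_tail]


noncomputable def conv (m n : ℕ) : ℝ :=
  ∑ k ∈ Finset.Nat.antidiagonalTuple m n, (Nat.multinomial Finset.univ k : ℝ) * ∏ i, cauchy (k i)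

lemma conv_zero (n : ℕ) : conv 0 n = if n = 0 then 1 else 0 := by
  match n with
  | 0 =>
    rw [conv, Finset.Nat.antidiagonalTuple_zero_zero]
    simp
  | n + 1 =>
    rw [conv, Finset.Nat.antidiagonalTuple_zero_succ]
    simp

lemma conv_succ (m n : ℕ) :
    conv (m + 1) n = ∑ p ∈ antidiagonal n, (n.choose p.1 : ℝ) * cauchy p.1 * conv m p.2 := by
  rw [conv, sum_antidiagonalTuple_succ]
  refine Finset.sum_congr rfl fun p hp => ?_
  rw [Finset.HasAntidiagonal.mem_antidiagonal] at hp
  rw [conv, Finset.mul_sum]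
  refine Finset.sum_congr rfl fun k hk => ?_
  rw [Finset.Nat.mem_antidiagonalTuple] at hk
  rw [multinomial_fin_cons, Fin.prod_univ_succ, Fin.cons_zero]
  simp only [Fin.cons_succ]
  rw [hk, hp]
  push_cast
  ring

noncomputable def Jint : ℕ → ℕ → ℝ → ℝ
  | 0 => fun n y => fallFac y n
  | m + 1 => fun n y => ∫ θ in (0:ℝ)..1, Jint m n (y + θ)

lemma Jint_zero_def (n : ℕ) (y : ℝ) : Jint 0 n y = fallFac y n := rfl

lemma Jint_succ_def (m n : ℕ) (y : ℝ) :
    Jint (m + 1) n y = ∫ θ in (0:ℝ)..1, Jint m n (y + θ) := rfl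

lemma nat_choose_assoc {n j s i rr : ℕ} (h1 : j + s = n) (h2 : i + rr = s) :
    n.choose j * s.choose i = n.choose (i + j) * (i + j).choose i := by
  have hA := Nat.choose_mul (n := n) (show j ≤ i + j by omega)
  rw [show i + j - j = i by omega] at hA
  rw [show s = n - j by omega]
  rw [← hA, Nat.choose_symm_add]

lemma antidiag_assoc {M : Type} [AddCommMonoid M] (n : ℕ) (f : ℕ → ℕ → ℕ → M) :
    ∑ p ∈ antidiagonal n, ∑ q ∈ antidiagonal p.2, f p.1 q.1 q.2
      = ∑ r ∈ antidiagonal n, ∑ q ∈ antidiagonal r.1, f q.2 q.1 r.2 := by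
  rw [← Finset.sum_sigma (antidiagonal n) (fun p => antidiagonal p.2)
    (fun x => f x.1.1 x.2.1 x.2.2)]
  rw [← Finset.sum_sigma (antidiagonal n) (fun r => antidiagonal r.1)
    (fun x => f x.2.2 x.2.1 x.1.2)]
  apply Finset.sum_nbij' (fun x => ⟨(x.2.1 + x.1.1, x.2.2), (x.2.1, x.1.1)⟩)
    (fun x => ⟨(x.2.2, x.2.1 + x.1.2), (x.2.1, x.1.2)⟩)
  · intro x hx
    obtain ⟨⟨j, s⟩, ⟨i, rr⟩⟩ := x
    simp only [Finset.mem_sigma, Finset.HasAntidiagonal.mem_antidiagonal] at hx ⊢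
    exact ⟨by omega, trivial⟩
  · intro x hx
    obtain ⟨⟨p, rr⟩, ⟨i, j⟩⟩ := x
    simp only [Finset.mem_sigma, Finset.HasAntidiagonal.mem_antidiagonal] at hx ⊢
    exact ⟨by omega, trivial⟩
  · intro x hx
    obtain ⟨⟨j, s⟩, ⟨i, rr⟩⟩ := x
    rw [Finset.mem_sigma, Finset.HasAntidiagonal.mem_antidiagonal, Finset.HasAntidiagonal.mem_antidiagonal] at hx
    simp only at hx
    refine Sigma.ext ?_ ?_
    · simp only
      rw [Prod.mk.injEq]
      exact ⟨rfl, by omega⟩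
    · exact HEq.rfl
  · intro x hx
    obtain ⟨⟨p, rr⟩, ⟨i, j⟩⟩ := x
    rw [Finset.mem_sigma, Finset.HasAntidiagonal.mem_antidiagonal, Finset.HasAntidiagonal.mem_antidiagonal] at hx
    simp only at hx
    refine Sigma.ext ?_ ?_
    · simp only
      rw [Prod.mk.injEq]
      exact ⟨by omega, rfl⟩
    · exact HEq.rfl
  · intro x hx
    rfl

lemma JintA (m : ℕ) : ∀ (n : ℕ) (y : ℝ),
    Jint m n y = ∑ p ∈ antidiagonal n, (n.choose p.1 : ℝ) * conv m p.1 * fallFac y p.2 := by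
  induction m with
  | zero =>
    intro n y
    show fallFac y n = _
    rw [Finset.sum_eq_single (0, n)]
    · rw [conv_zero]
      simp
    · intro b hb hbne
      rw [Finset.HasAntidiagonal.mem_antidiagonal] at hb
      have : b.1 ≠ 0 := by
        intro h0
        apply hbne
        have : b.2 = n := by omega
        exact Prod.ext h0 this
      rw [conv_zero, if_neg this]
      ring
    · intro h
      exact absurd (Finset.HasAntidiagonal.mem_antidiagonal.mpr (by simp)) h
  | succ m ih =>
    intro n y
    rw [Jint_succ_def]
    have h1 : ∀ θ : ℝ, Jint m n (y + θ)
        = ∑ p ∈ antidiagonal n, (n.choose p.1 : ℝ) * conv m p.1 * fallFac (y + θ) p.2 :=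
      fun θ => ih n (y + θ)
    simp only [h1]
    rw [intervalIntegral.integral_finset_sum]
    swap
    · intro p _
      apply Continuous.intervalIntegrable
      exact continuous_const.mul
        ((continuous_fallFac p.2).comp (continuous_const.add continuous_id))
    have h2 : ∀ p ∈ antidiagonal n,
        (∫ θ in (0:ℝ)..1, (n.choose p.1 : ℝ) * conv m p.1 * fallFac (y + θ) p.2)
          = ∑ q ∈ antidiagonal p.2,
              ((n.choose p.1 : ℝ) * conv m p.1) * ((p.2.choose q.1 : ℝ) * cauchy q.1 * fallFac y q.2) := by
      intro p _
      have e1 : (fun θ : ℝ => (n.choose p.1 : ℝ) * conv m p.1 * fallFac (y + θ) p.2)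
          = fun θ : ℝ => ((n.choose p.1 : ℝ) * conv m p.1) * fallFac (y + θ) p.2 := rfl
      rw [e1, intervalIntegral.integral_const_mul, ← Finset.mul_sum]
      congr 1
      have e2 : ∀ θ : ℝ, fallFac (y + θ) p.2
          = ∑ q ∈ antidiagonal p.2, (p.2.choose q.1 : ℝ) * fallFac θ q.1 * fallFac y q.2 := by
        intro θ
        rw [show y + θ = θ + y by ring, fallFac_add]
      simp only [e2]
      rw [intervalIntegral.integral_finset_sum]
      swap
      · intro q _
        apply Continuous.intervalIntegrable
        exact (continuous_const.mul (continuous_fallFac q.1)).mul continuous_const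
      refine Finset.sum_congr rfl fun q _ => ?_
      have e3 : (fun θ : ℝ => (p.2.choose q.1 : ℝ) * fallFac θ q.1 * fallFac y q.2)
          = fun θ : ℝ => ((p.2.choose q.1 : ℝ) * fallFac y q.2) * fallFac θ q.1 := by
        funext θ; ring
      rw [e3, intervalIntegral.integral_const_mul]
      show (p.2.choose q.1 : ℝ) * fallFac y q.2 * cauchy q.1 = _
      ring
    rw [Finset.sum_congr rfl h2]
    have h3 : ∀ p ∈ antidiagonal n, ∀ q ∈ antidiagonal p.2,
        ((n.choose p.1 : ℝ) * conv m p.1) * ((p.2.choose q.1 : ℝ) * cauchy q.1 * fallFac y q.2)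
          = (n.choose (q.1 + p.1) : ℝ) * ((q.1 + p.1).choose q.1 : ℝ)
              * conv m p.1 * cauchy q.1 * fallFac y q.2 := by
      intro p hp q hq
      rw [Finset.HasAntidiagonal.mem_antidiagonal] at hp hq
      have := nat_choose_assoc hp hq
      have hc : ((n.choose p.1 * p.2.choose q.1 : ℕ) : ℝ)
          = ((n.choose (q.1 + p.1) * (q.1 + p.1).choose q.1 : ℕ) : ℝ) := by
        exact_mod_cast congrArg (Nat.cast : ℕ → ℝ) this
      push_cast at hc
      linear_combination (conv m p.1 * cauchy q.1 * fallFac y q.2) * hc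
    calc ∑ p ∈ antidiagonal n, ∑ q ∈ antidiagonal p.2,
            ((n.choose p.1 : ℝ) * conv m p.1) * ((p.2.choose q.1 : ℝ) * cauchy q.1 * fallFac y q.2)
        = ∑ p ∈ antidiagonal n, ∑ q ∈ antidiagonal p.2,
            (n.choose (q.1 + p.1) : ℝ) * ((q.1 + p.1).choose q.1 : ℝ)
              * conv m p.1 * cauchy q.1 * fallFac y q.2 := by
          refine Finset.sum_congr rfl fun p hp => Finset.sum_congr rfl fun q hq => h3 p hp q hq
      _ = ∑ r ∈ antidiagonal n, ∑ q ∈ antidiagonal r.1,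
            (n.choose (q.1 + q.2) : ℝ) * ((q.1 + q.2).choose q.1 : ℝ)
              * conv m q.2 * cauchy q.1 * fallFac y r.2 :=
          antidiag_assoc n (fun j i rr => (n.choose (i + j) : ℝ) * ((i + j).choose i : ℝ)
              * conv m j * cauchy i * fallFac y rr)
      _ = ∑ r ∈ antidiagonal n, (n.choose r.1 : ℝ) * conv (m + 1) r.1 * fallFac y r.2 := by
          refine Finset.sum_congr rfl fun r hr => ?_
          rw [conv_succ, Finset.mul_sum, Finset.sum_mul]
          refine Finset.sum_congr rfl fun q hq => ?_
          rw [Finset.HasAntidiagonal.mem_antidiagonal] at hq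
          rw [show q.1 + q.2 = r.1 by omega]
          ring


lemma JintB : ∀ (m : ℕ) (n : ℕ) (y : ℝ),
    Jint m n y = ∑ k ∈ range (n + 1), stirlingFst n k * Jpow m k y := by
  intro m
  induction m with
  | zero =>
    intro n y
    rw [Jint_zero_def, fallFac_eq_sum]
    refine Finset.sum_congr rfl fun k _ => ?_
    rw [Jpow_zero_def]
  | succ m ih =>
    intro n y
    rw [Jint_succ_def]
    have h1 : ∀ θ : ℝ, Jint m n (y + θ)
        = ∑ k ∈ range (n + 1), stirlingFst n k * Jpow m k (y + θ) := fun θ => ih n (y + θ)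
    simp only [h1]
    rw [intervalIntegral.integral_finset_sum]
    · refine Finset.sum_congr rfl fun k _ => ?_
      rw [intervalIntegral.integral_const_mul, Jpow_succ_def]
    · intro k _
      apply Continuous.intervalIntegrable
      have h2 : (fun θ : ℝ => stirlingFst n k * Jpow m k (y + θ))
          = fun θ : ℝ => stirlingFst n k *
              ∑ q ∈ antidiagonal k, (k.choose q.1 : ℝ) * θ ^ q.1 * Jpow m q.2 y := by
        funext θ
        rw [show y + θ = θ + y by ring, Jpow_add]
      rw [h2]
      exact continuous_const.mul (continuous_finset_sum _ fun q _ =>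
        (continuous_const.mul (continuous_pow _)).mul continuous_const)

theorem cauchy_mfold_convolution (m : ℕ) (hm : 1 ≤ m) (n : ℕ) :
    ∑ k ∈ Finset.Nat.antidiagonalTuple m n,
        (Nat.multinomial Finset.univ k : ℝ) * ∏ i, cauchy (k i) =
      ∑ k ∈ Finset.range (n + 1),
        stirlingFst n k * (stirlingSnd (m + k) m : ℝ) / ((m + k).choose m : ℝ) := by
  have h1 : conv m n = Jint m n 0 := by
    rw [JintA]
    rw [Finset.sum_eq_single (n, 0)]
    · rw [fallFac_zero, Nat.choose_self]
      norm_num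
    · intro b hb hbne
      rw [Finset.HasAntidiagonal.mem_antidiagonal] at hb
      have hb2 : b.2 ≠ 0 := by
        intro h0
        apply hbne
        exact Prod.ext (by omega) h0
      rw [fallFac_zero_left, if_neg hb2]
      ring
    · intro h
      exact absurd (Finset.HasAntidiagonal.mem_antidiagonal.mpr (by simp)) h
  have h2 : Jint m n 0 = ∑ k ∈ range (n + 1), stirlingFst n k * Jpow m k 0 := JintB m n 0
  show conv m n = _
  rw [h1, h2]
  refine Finset.sum_congr rfl fun k _ => ?_
  rw [Jpow_zero_eq, mul_div_assoc]
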